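/- Let T be a bounded linear operator on a complex Hilbert space H and n ≥ 2 an integer. Then w(T) ≤ (log((1/2^{n−1}) e^{w(T^n)} + (1 − 1/2^{n−1}) e^{‖T‖^n}))^{1/n} ≤ ‖T‖. In particular, if T^n = 0, then w(T) ≤ (log(1/2^{n−1} + (1 − 1/2^{n−1})e))^{1/n} ‖T‖. -/

import Mathlib

open scoped InnerProductSpace
open Set Filter

variable {H : Type*} [NormedAddCommGroup H] [InnerProductSpace ℂ H] [CompleteSpace H]

/-- The numerical radius of a bounded linear operator. -/
noncomputable def numRad (T : H →L[ℂ] H) : ℝ :=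
  ⨆ x : {x : H // ‖x‖ = 1}, ‖(⟪T x, x⟫_ℂ)‖

/-- The absolute value `|T| = (T*T)^(1/2)` of a bounded linear operator. -/
noncomputable def opAbs (T : H →L[ℂ] H) : H →L[ℂ] H := CFC.sqrt (star T * T)

set_option linter.unusedSectionVars false

lemma pow_norm_le_one (T : H →L[ℂ] H) (hT : ‖T‖ ≤ 1) (m : ℕ) : ‖T ^ m‖ ≤ 1 := by
  induction m with
  | zero => rw [pow_zero]; exact ContinuousLinearMap.norm_id_le
  | succ k ih =>
      calc ‖T ^ (k + 1)‖ = ‖T ^ k * T‖ := by rw [pow_succ]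
      _ ≤ ‖T ^ k‖ * ‖T‖ := norm_mul_le _ _
      _ ≤ 1 := by nlinarith [norm_nonneg (T ^ k), norm_nonneg T]

lemma step_ineq (T : H →L[ℂ] H) (hT : ‖T‖ ≤ 1) (x : H) (hx : ‖x‖ = 1) (m : ℕ) :
    ‖⟪x, T x⟫_ℂ‖ * ‖⟪x, (T ^ m) x⟫_ℂ‖ -
      Real.sqrt (1 - ‖⟪x, T x⟫_ℂ‖ ^ 2) * Real.sqrt (1 - ‖⟪x, (T ^ m) x⟫_ℂ‖ ^ 2)
      ≤ ‖⟪x, (T ^ (m + 1)) x⟫_ℂ‖ := by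
  set a : ℂ := ⟪x, T x⟫_ℂ with ha
  set b : ℂ := ⟪x, (T ^ m) x⟫_ℂ with hb
  set S : H →L[ℂ] H := ContinuousLinearMap.adjoint (T ^ m) with hS
  set y : H := T x - a • x with hy
  set z : H := S x - (starRingEnd ℂ b) • x with hz
  have hxx : (⟪x, x⟫_ℂ) = 1 := by
    rw [inner_self_eq_norm_sq_to_K, hx]; norm_num
  have hxy : ⟪x, y⟫_ℂ = 0 := by
    simp [hy, inner_sub_right, inner_smul_right, hxx, hx, ha]
  have hSx : ⟪x, S x⟫_ℂ = starRingEnd ℂ b := by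
    rw [← inner_conj_symm, hS, ContinuousLinearMap.adjoint_inner_left]
  have hxz : ⟪x, z⟫_ℂ = 0 := by
    simp [hz, inner_sub_right, inner_smul_right, hxx, hSx, hx]
  have key : (⟪x, (T ^ (m + 1)) x⟫_ℂ) = a * b + ⟪z, y⟫_ℂ := by
    have h1 : (T ^ (m + 1)) x = (T ^ m) (T x) := by
      rw [pow_succ]; rfl
    have h2 : T x = a • x + y := by simp [hy]
    rw [h1, h2, map_add, map_smul, inner_add_right, inner_smul_right]
    have h3 : ⟪x, (T ^ m) y⟫_ℂ = ⟪S x, y⟫_ℂ := by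
      rw [hS, ContinuousLinearMap.adjoint_inner_left]
    have h4 : ⟪S x, y⟫_ℂ = ⟪z, y⟫_ℂ := by
      have : S x = z + (starRingEnd ℂ b) • x := by simp [hz]
      rw [this, inner_add_left, inner_smul_left]
      simp [hxy]
    rw [h3, h4, hb]
  have hna : ‖a‖ ≤ 1 := by
    calc ‖a‖ ≤ ‖x‖ * ‖T x‖ := norm_inner_le_norm _ _
    _ ≤ ‖x‖ * (‖T‖ * ‖x‖) := by
        have := T.le_opNorm x
        nlinarith [norm_nonneg x]
    _ ≤ 1 := by rw [hx]; nlinarith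
  have hTm : ‖T ^ m‖ ≤ 1 := pow_norm_le_one T hT m
  have hnb : ‖b‖ ≤ 1 := by
    calc ‖b‖ ≤ ‖x‖ * ‖(T ^ m) x‖ := norm_inner_le_norm _ _
    _ ≤ ‖x‖ * (‖T ^ m‖ * ‖x‖) := by
        have := (T ^ m).le_opNorm x
        nlinarith [norm_nonneg x]
    _ ≤ 1 := by rw [hx]; nlinarith
  have hy2 : ‖y‖ ^ 2 ≤ 1 - ‖a‖ ^ 2 := by
    have h2 : T x = a • x + y := by simp [hy]
    have horth : ⟪a • x, y⟫_ℂ = 0 := by rw [inner_smul_left, hxy]; simp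
    have hpyth : ‖T x‖ ^ 2 = ‖a • x‖ ^ 2 + ‖y‖ ^ 2 := by
      rw [h2]
      have := norm_add_sq_eq_norm_sq_add_norm_sq_of_inner_eq_zero _ _ horth
      rw [sq, sq, sq]; exact this
    have hTx : ‖T x‖ ≤ 1 := by
      have := T.le_opNorm x; rw [hx] at this; nlinarith
    have hax : ‖a • x‖ = ‖a‖ := by rw [norm_smul, hx, mul_one]
    nlinarith [norm_nonneg (T x)]
  have hz2 : ‖z‖ ^ 2 ≤ 1 - ‖b‖ ^ 2 := by
    have h2 : S x = (starRingEnd ℂ b) • x + z := by simp [hz]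
    have horth : ⟪(starRingEnd ℂ b) • x, z⟫_ℂ = 0 := by
      rw [inner_smul_left, hxz]; simp
    have hpyth : ‖S x‖ ^ 2 = ‖(starRingEnd ℂ b) • x‖ ^ 2 + ‖z‖ ^ 2 := by
      rw [h2]
      have := norm_add_sq_eq_norm_sq_add_norm_sq_of_inner_eq_zero _ _ horth
      rw [sq, sq, sq]; exact this
    have hSn : ‖S‖ ≤ 1 := by
      rw [hS]
      calc ‖ContinuousLinearMap.adjoint (T ^ m)‖ = ‖T ^ m‖ :=
        ContinuousLinearMap.adjoint.norm_map _
      _ ≤ 1 := hTm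
    have hSx' : ‖S x‖ ≤ 1 := by
      have := S.le_opNorm x; rw [hx] at this; nlinarith
    have hbx : ‖(starRingEnd ℂ b) • x‖ = ‖b‖ := by
      rw [norm_smul, hx, mul_one, RCLike.norm_conj]
    nlinarith [norm_nonneg (S x)]
  have hyn : ‖y‖ ≤ Real.sqrt (1 - ‖a‖ ^ 2) := Real.le_sqrt_of_sq_le hy2
  have hzn : ‖z‖ ≤ Real.sqrt (1 - ‖b‖ ^ 2) := Real.le_sqrt_of_sq_le hz2
  have hzy : ‖⟪z, y⟫_ℂ‖ ≤ Real.sqrt (1 - ‖a‖ ^ 2) * Real.sqrt (1 - ‖b‖ ^ 2) := by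
    calc ‖⟪z, y⟫_ℂ‖ ≤ ‖z‖ * ‖y‖ := norm_inner_le_norm _ _
    _ ≤ Real.sqrt (1 - ‖b‖ ^ 2) * Real.sqrt (1 - ‖a‖ ^ 2) :=
        mul_le_mul hzn hyn (norm_nonneg _) (Real.sqrt_nonneg _)
    _ = _ := mul_comm _ _
  calc ‖a‖ * ‖b‖ - Real.sqrt (1 - ‖a‖ ^ 2) * Real.sqrt (1 - ‖b‖ ^ 2)
      ≤ ‖a * b‖ - ‖⟪z, y⟫_ℂ‖ := by rw [norm_mul]; linarith
  _ ≤ ‖a * b + ⟪z, y⟫_ℂ‖ := by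
      have h1 : ‖a * b‖ ≤ ‖a * b + ⟪z, y⟫_ℂ‖ + ‖⟪z, y⟫_ℂ‖ := by
        calc ‖a * b‖ = ‖(a * b + ⟪z, y⟫_ℂ) - ⟪z, y⟫_ℂ‖ := by ring_nf
        _ ≤ ‖a * b + ⟪z, y⟫_ℂ‖ + ‖⟪z, y⟫_ℂ‖ := norm_sub_le _ _
      linarith
  _ = ‖⟪x, (T ^ (m + 1)) x⟫_ℂ‖ := by rw [key]


lemma cheb_step (s t : ℝ) (m : ℕ) (hs0 : 0 ≤ s) (hs1 : s ≤ 1) (ht0 : 0 ≤ t) (ht1 : t ≤ 1)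
    (h : 2 ^ m * s ^ (m + 1) - (2 ^ m - 1) ≤ t) :
    2 ^ (m + 1) * s ^ (m + 2) - (2 ^ (m + 1) - 1) ≤
      s * t - Real.sqrt (1 - s ^ 2) * Real.sqrt (1 - t ^ 2) := by
  have h2m : (1 : ℝ) ≤ 2 ^ m := one_le_pow₀ (by norm_num)
  set p : ℝ := 2 ^ m * s ^ (m + 1) - (2 ^ m - 1) with hp
  have hid : 2 ^ (m + 1) * s ^ (m + 2) = 2 * s * p + 2 * s * (2 ^ m - 1) := by
    rw [hp]; ring
  have hsq1 : Real.sqrt (1 - s ^ 2) ≤ 1 := Real.sqrt_le_one.mpr (by nlinarith)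
  have hsq1' : Real.sqrt (1 - t ^ 2) ≤ 1 := Real.sqrt_le_one.mpr (by nlinarith)
  rcases le_or_gt p 0 with hp0 | hp0
  · -- RHS of target ≥ -1, LHS ≤ -1
    have hL : 2 ^ (m + 1) * s ^ (m + 2) - (2 ^ (m + 1) - 1) ≤ -1 := by
      rw [hid, pow_succ]
      nlinarith [mul_nonneg hs0 (sub_nonneg.mpr h2m)]
    have hR : (-1 : ℝ) ≤ s * t - Real.sqrt (1 - s ^ 2) * Real.sqrt (1 - t ^ 2) := by
      nlinarith [mul_nonneg hs0 ht0, Real.sqrt_nonneg (1 - s ^ 2), Real.sqrt_nonneg (1 - t ^ 2)]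
    linarith
  · have hp1 : p ≤ 1 := le_trans h ht1
    have hpt : p ≤ t := h
    have hCS : Real.sqrt (1 - s ^ 2) * Real.sqrt (1 - p ^ 2) ≤ 1 - s * p := by
      rw [← Real.sqrt_mul (by nlinarith)]
      rw [show Real.sqrt ((1 - s ^ 2) * (1 - p ^ 2)) ≤ 1 - s * p ↔ _ from Real.sqrt_le_iff]
      constructor
      · nlinarith
      · nlinarith [sq_nonneg (s - p), sq_nonneg (s*p)]
    have hmono : Real.sqrt (1 - t ^ 2) ≤ Real.sqrt (1 - p ^ 2) :=
      Real.sqrt_le_sqrt (by nlinarith)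
    have h1 : Real.sqrt (1 - s ^ 2) * Real.sqrt (1 - t ^ 2) ≤
        Real.sqrt (1 - s ^ 2) * Real.sqrt (1 - p ^ 2) :=
      mul_le_mul_of_nonneg_left hmono (Real.sqrt_nonneg _)
    have h2 : s * p ≤ s * t := mul_le_mul_of_nonneg_left hpt hs0
    rw [hid, pow_succ]
    nlinarith [mul_nonneg (sub_nonneg.mpr hs1) (sub_nonneg.mpr h2m)]


lemma numRad_nonneg (T : H →L[ℂ] H) : 0 ≤ numRad T :=
  Real.iSup_nonneg fun _ => norm_nonneg _

lemma inner_norm_le (T : H →L[ℂ] H) (x : H) (hx : ‖x‖ = 1) : ‖⟪T x, x⟫_ℂ‖ ≤ ‖T‖ := by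
  calc ‖⟪T x, x⟫_ℂ‖ ≤ ‖T x‖ * ‖x‖ := norm_inner_le_norm _ _
  _ ≤ ‖T‖ * ‖x‖ * ‖x‖ := by
      have := T.le_opNorm x
      nlinarith [norm_nonneg x]
  _ = ‖T‖ := by rw [hx]; ring

lemma numRad_le_norm (T : H →L[ℂ] H) : numRad T ≤ ‖T‖ :=
  Real.iSup_le (fun x => inner_norm_le T x x.2) (norm_nonneg T)

lemma inner_le_numRad (T : H →L[ℂ] H) (x : H) (hx : ‖x‖ = 1) :
    ‖⟪T x, x⟫_ℂ‖ ≤ numRad T := by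
  have hbdd : BddAbove (Set.range fun x : {x : H // ‖x‖ = 1} => ‖(⟪T x, x⟫_ℂ)‖) := by
    refine ⟨‖T‖, ?_⟩
    rintro _ ⟨y, rfl⟩
    exact inner_norm_le T y y.2
  exact le_ciSup hbdd (⟨x, hx⟩ : {x : H // ‖x‖ = 1})


lemma inner_norm_le' (T : H →L[ℂ] H) (x : H) (hx : ‖x‖ = 1) : ‖⟪x, T x⟫_ℂ‖ ≤ ‖T‖ := by
  rw [← inner_conj_symm, RCLike.norm_conj]
  exact inner_norm_le T x hx

lemma pointwise_cheb (T : H →L[ℂ] H) (hT : ‖T‖ ≤ 1) (x : H) (hx : ‖x‖ = 1) (m : ℕ) :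
    2 ^ m * ‖⟪x, T x⟫_ℂ‖ ^ (m + 1) - (2 ^ m - 1) ≤ ‖⟪x, (T ^ (m + 1)) x⟫_ℂ‖ := by
  induction m with
  | zero => simp
  | succ k ih =>
      have hs0 : (0:ℝ) ≤ ‖⟪x, T x⟫_ℂ‖ := norm_nonneg _
      have hs1 : ‖⟪x, T x⟫_ℂ‖ ≤ 1 := (inner_norm_le' T x hx).trans hT
      have ht0 : (0:ℝ) ≤ ‖⟪x, (T ^ (k + 1)) x⟫_ℂ‖ := norm_nonneg _
      have ht1 : ‖⟪x, (T ^ (k + 1)) x⟫_ℂ‖ ≤ 1 :=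
        (inner_norm_le' (T ^ (k + 1)) x hx).trans (pow_norm_le_one T hT (k + 1))
      calc 2 ^ (k + 1) * ‖⟪x, T x⟫_ℂ‖ ^ (k + 2) - (2 ^ (k + 1) - 1)
          ≤ ‖⟪x, T x⟫_ℂ‖ * ‖⟪x, (T ^ (k + 1)) x⟫_ℂ‖ -
            Real.sqrt (1 - ‖⟪x, T x⟫_ℂ‖ ^ 2) *
              Real.sqrt (1 - ‖⟪x, (T ^ (k + 1)) x⟫_ℂ‖ ^ 2) :=
            cheb_step _ _ k hs0 hs1 ht0 ht1 ih
      _ ≤ ‖⟪x, (T ^ (k + 2)) x⟫_ℂ‖ := step_ineq T hT x hx (k + 1)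

lemma pointwise_scaled (T : H →L[ℂ] H) (x : H) (hx : ‖x‖ = 1) (m : ℕ) :
    2 ^ m * ‖⟪x, T x⟫_ℂ‖ ^ (m + 1) ≤
      ‖⟪x, (T ^ (m + 1)) x⟫_ℂ‖ + (2 ^ m - 1) * ‖T‖ ^ (m + 1) := by
  by_cases hT0 : T = 0
  · subst hT0
    simp [zero_pow (Nat.succ_ne_zero m)]
  · set c : ℝ := ‖T‖ with hc
    have hc0 : 0 < c := norm_pos_iff.mpr hT0
    set S : H →L[ℂ] H := ((c⁻¹ : ℝ) : ℂ) • T with hSdef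
    have hSnorm : ‖S‖ = 1 := by
      rw [hSdef, norm_smul]
      simp [Complex.norm_real, abs_of_pos (inv_pos.mpr hc0)]
      rw [abs_of_pos hc0]
      field_simp
      exact hc.symm
    have hSpow : S ^ (m + 1) = (((c⁻¹ : ℝ) : ℂ) ^ (m + 1)) • T ^ (m + 1) := smul_pow _ _ _
    have hinner1 : ‖⟪x, S x⟫_ℂ‖ = c⁻¹ * ‖⟪x, T x⟫_ℂ‖ := by
      rw [hSdef]
      simp [inner_smul_right, norm_mul, Complex.norm_real, abs_of_pos (inv_pos.mpr hc0)]
      exact Or.inl hc0.le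
    have hinner2 : ‖⟪x, (S ^ (m + 1)) x⟫_ℂ‖ = (c⁻¹) ^ (m + 1) * ‖⟪x, (T ^ (m + 1)) x⟫_ℂ‖ := by
      rw [hSpow]
      simp [inner_smul_right, norm_mul, norm_pow, Complex.norm_real,
        abs_of_pos (inv_pos.mpr hc0)]
      exact Or.inl (by rw [abs_of_pos hc0])
    have h := pointwise_cheb S (le_of_eq hSnorm) x hx m
    rw [hinner1, hinner2, mul_pow] at h
    set s := ‖⟪x, T x⟫_ℂ‖
    set A := ‖⟪x, (T ^ (m + 1)) x⟫_ℂ‖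
    set d : ℝ := (c⁻¹) ^ (m + 1) with hd
    set e : ℝ := c ^ (m + 1) with he
    have hed : e * d = 1 := by
      rw [hd, he, ← mul_pow, mul_inv_cancel₀ (ne_of_gt hc0), one_pow]
    have he0 : 0 < e := pow_pos hc0 _
    -- h : 2 ^ m * (d * s ^ (m+1)) - (2 ^ m - 1) ≤ d * A
    have h2 := mul_le_mul_of_nonneg_left h he0.le
    have hL : e * (2 ^ m * (d * s ^ (m + 1)) - (2 ^ m - 1)) =
        2 ^ m * s ^ (m + 1) - (2 ^ m - 1) * e := by
      linear_combination (2 ^ m * s ^ (m + 1) : ℝ) * hed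
    have hR : e * (d * A) = A := by linear_combination A * hed
    rw [hL, hR] at h2
    linarith


lemma inner_flip (A : H →L[ℂ] H) (x : H) : ‖⟪x, A x⟫_ℂ‖ = ‖⟪A x, x⟫_ℂ‖ := by
  rw [← inner_conj_symm, RCLike.norm_conj]

lemma numRad_power_ineq (T : H →L[ℂ] H) (m : ℕ) :
    2 ^ m * numRad T ^ (m + 1) ≤ numRad (T ^ (m + 1)) + (2 ^ m - 1) * ‖T‖ ^ (m + 1) := by
  have h2m : (1:ℝ) ≤ 2 ^ m := one_le_pow₀ (by norm_num)
  set C : ℝ := numRad (T ^ (m + 1)) + (2 ^ m - 1) * ‖T‖ ^ (m + 1) with hC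
  have hC0 : 0 ≤ C := by
    have h1 := numRad_nonneg (T ^ (m + 1))
    have h2 := pow_nonneg (norm_nonneg T) (m + 1)
    nlinarith
  have h2mp : (0:ℝ) < 2 ^ m := by positivity
  have hCdiv0 : 0 ≤ C / 2 ^ m := div_nonneg hC0 h2mp.le
  have hk : ((m + 1 : ℕ) : ℝ) ≠ 0 := by positivity
  have hsup : numRad T ≤ (C / 2 ^ m) ^ ((1:ℝ) / (m + 1 : ℕ)) := by
    apply Real.iSup_le _ (Real.rpow_nonneg hCdiv0 _)
    intro x
    set u : ℝ := ‖⟪T x.1, x.1⟫_ℂ‖ with hu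
    have hu0 : 0 ≤ u := norm_nonneg _
    have hub : u ^ (m + 1) ≤ C / 2 ^ m := by
      rw [le_div_iff₀ h2mp]
      have h1 := pointwise_scaled T x.1 x.2 m
      rw [inner_flip T, inner_flip (T ^ (m + 1))] at h1
      have h2 := inner_le_numRad (T ^ (m + 1)) x.1 x.2
      rw [hC]; nlinarith [pow_nonneg (norm_nonneg T) (m + 1)]
    have hrep : u = (u ^ (m + 1)) ^ ((1:ℝ) / (m + 1 : ℕ)) := by
      rw [← Real.rpow_natCast u (m + 1), ← Real.rpow_mul hu0,
        mul_one_div_cancel hk, Real.rpow_one]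
    rw [hrep]
    exact Real.rpow_le_rpow (pow_nonneg hu0 _) hub (by positivity)
  have hfin : numRad T ^ (m + 1) ≤ C / 2 ^ m := by
    calc numRad T ^ (m + 1) ≤ ((C / 2 ^ m) ^ ((1:ℝ) / (m + 1 : ℕ))) ^ (m + 1) :=
      pow_le_pow_left₀ (numRad_nonneg T) hsup _
    _ = C / 2 ^ m := by
        rw [← Real.rpow_natCast ((C / 2 ^ m) ^ ((1:ℝ) / (m + 1 : ℕ))) (m + 1),
          ← Real.rpow_mul hCdiv0, one_div_mul_cancel hk, Real.rpow_one]
  rw [le_div_iff₀ h2mp] at hfin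
  linarith


lemma numRad_zero : numRad (0 : H →L[ℂ] H) = 0 := by
  refine le_antisymm ?_ (numRad_nonneg 0)
  exact (numRad_le_norm 0).trans (by simp)

theorem stmt19 (T : H →L[ℂ] H) (n : ℕ) (hn : 2 ≤ n) :
    (numRad T ≤
      (Real.log ((1 / 2 ^ (n - 1)) * Real.exp (numRad (T ^ n)) +
        (1 - 1 / 2 ^ (n - 1)) * Real.exp (‖T‖ ^ n))) ^ ((1 : ℝ) / n) ∧
    (Real.log ((1 / 2 ^ (n - 1)) * Real.exp (numRad (T ^ n)) +
        (1 - 1 / 2 ^ (n - 1)) * Real.exp (‖T‖ ^ n))) ^ ((1 : ℝ) / n) ≤ ‖T‖) ∧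
    (T ^ n = 0 →
      numRad T ≤
        (Real.log (1 / 2 ^ (n - 1) + (1 - 1 / 2 ^ (n - 1)) * Real.exp 1)) ^ ((1 : ℝ) / n) *
          ‖T‖) := by
  obtain ⟨m, rfl⟩ : ∃ m, n = m + 1 := ⟨n - 1, (Nat.succ_pred_eq_of_pos (by omega)).symm⟩
  simp only [Nat.add_sub_cancel]
  set w : ℝ := numRad T with hw
  set wn : ℝ := numRad (T ^ (m + 1)) with hwn
  set N : ℝ := ‖T‖ with hN
  have hw0 : 0 ≤ w := numRad_nonneg T
  have hwn0 : 0 ≤ wn := numRad_nonneg _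
  have hN0 : 0 ≤ N := norm_nonneg T
  have h2m : (1:ℝ) ≤ 2 ^ m := one_le_pow₀ (by norm_num)
  have h2mp : (0:ℝ) < 2 ^ m := by positivity
  set lam : ℝ := 1 / 2 ^ m with hlam
  have hlam0 : 0 < lam := by positivity
  have hlam1 : lam ≤ 1 := by rw [hlam]; rw [div_le_one h2mp]; exact h2m
  have hk : ((m + 1 : ℕ) : ℝ) ≠ 0 := by positivity
  have hpow := numRad_power_ineq T m
  -- convex combination bound
  have hconv : w ^ (m + 1) ≤ lam * wn + (1 - lam) * N ^ (m + 1) := by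
    rw [show lam * wn + (1 - lam) * N ^ (m + 1) =
        (wn + (2 ^ m - 1) * N ^ (m + 1)) / 2 ^ m from by
      rw [hlam]; field_simp; try ring]
    rw [le_div_iff₀ h2mp]
    linarith
  have hwnN : wn ≤ N ^ (m + 1) :=
    (numRad_le_norm _).trans (norm_pow_le' T (Nat.succ_pos m))
  -- positivity of the argument of log
  set Y : ℝ := lam * Real.exp wn + (1 - lam) * Real.exp (N ^ (m + 1)) with hY
  have hY0 : 0 < Y := by
    have := Real.exp_pos wn
    have := Real.exp_pos (N ^ (m + 1))
    nlinarith
  -- convexity of exp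
  have hexp : Real.exp (lam * wn + (1 - lam) * N ^ (m + 1)) ≤ Y := by
    have h := convexOn_exp.2 (Set.mem_univ wn) (Set.mem_univ (N ^ (m + 1)))
      hlam0.le (by linarith : (0:ℝ) ≤ 1 - lam) (by ring)
    simpa [smul_eq_mul] using h
  have hlog : w ^ (m + 1) ≤ Real.log Y :=
    (Real.le_log_iff_exp_le hY0).mpr
      ((Real.exp_le_exp.mpr hconv).trans hexp)
  have hL0 : 0 ≤ Real.log Y := le_trans (pow_nonneg hw0 _) hlog
  -- (i)
  have hrepw : w = (w ^ (m + 1)) ^ ((1:ℝ) / (m + 1 : ℕ)) := by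
    rw [← Real.rpow_natCast w (m + 1), ← Real.rpow_mul hw0,
      mul_one_div_cancel hk, Real.rpow_one]
  have hi : w ≤ Real.log Y ^ ((1:ℝ) / (m + 1 : ℕ)) := by
    rw [hrepw]
    exact Real.rpow_le_rpow (pow_nonneg hw0 _) hlog (by positivity)
  -- (ii)
  have hYle : Y ≤ Real.exp (N ^ (m + 1)) := by
    have h1 : Real.exp wn ≤ Real.exp (N ^ (m + 1)) := Real.exp_le_exp.mpr hwnN
    nlinarith [Real.exp_pos (N ^ (m + 1))]
  have hlogle : Real.log Y ≤ N ^ (m + 1) := by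
    rw [Real.log_le_iff_le_exp hY0]; exact hYle
  have hrepN : (N ^ (m + 1) : ℝ) ^ ((1:ℝ) / (m + 1 : ℕ)) = N := by
    rw [← Real.rpow_natCast N (m + 1), ← Real.rpow_mul hN0,
      mul_one_div_cancel hk, Real.rpow_one]
  have hii : Real.log Y ^ ((1:ℝ) / (m + 1 : ℕ)) ≤ N := by
    rw [← hrepN]
    exact Real.rpow_le_rpow hL0 hlogle (by positivity)
  refine ⟨⟨?_, ?_⟩, ?_⟩
  · push_cast at hi ⊢; exact hi
  · push_cast at hii ⊢; exact hii
  · intro h0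
    have hwn_eq : wn = 0 := by rw [hwn, h0, numRad_zero]
    have hw_pow : w ^ (m + 1) ≤ (1 - lam) * N ^ (m + 1) := by
      have : lam * wn = 0 := by rw [hwn_eq, mul_zero]
      nlinarith [hconv]
    set C : ℝ := Real.log (lam + (1 - lam) * Real.exp 1) with hCdef
    have hCpos : 0 < lam + (1 - lam) * Real.exp 1 := by
      nlinarith [Real.exp_pos 1]
    have hCge : 1 - lam ≤ C := by
      rw [hCdef, Real.le_log_iff_exp_le hCpos]
      have h := convexOn_exp.2 (Set.mem_univ (0:ℝ)) (Set.mem_univ (1:ℝ))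
        hlam0.le (by linarith : (0:ℝ) ≤ 1 - lam) (by ring)
      simpa [smul_eq_mul] using h
    have hC0 : 0 ≤ C := le_trans (by linarith) hCge
    have hstep : w ≤ (1 - lam) ^ ((1:ℝ) / (m + 1 : ℕ)) * N := by
      rw [hrepw]
      calc (w ^ (m + 1)) ^ ((1:ℝ) / (m + 1 : ℕ))
          ≤ ((1 - lam) * N ^ (m + 1)) ^ ((1:ℝ) / (m + 1 : ℕ)) :=
            Real.rpow_le_rpow (pow_nonneg hw0 _) hw_pow (by positivity)
      _ = (1 - lam) ^ ((1:ℝ) / (m + 1 : ℕ)) * (N ^ (m + 1)) ^ ((1:ℝ) / (m + 1 : ℕ)) :=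
            Real.mul_rpow (by linarith) (pow_nonneg hN0 _)
      _ = (1 - lam) ^ ((1:ℝ) / (m + 1 : ℕ)) * N := by rw [hrepN]
    have hfin : (1 - lam) ^ ((1:ℝ) / (m + 1 : ℕ)) ≤ C ^ ((1:ℝ) / (m + 1 : ℕ)) :=
      Real.rpow_le_rpow (by linarith) hCge (by positivity)
    calc w ≤ (1 - lam) ^ ((1:ℝ) / (m + 1 : ℕ)) * N := hstep
    _ ≤ C ^ ((1:ℝ) / (m + 1 : ℕ)) * N := mul_le_mul_of_nonneg_right hfin hN0
    _ = _ := by push_cast; ring
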